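/- arXiv:2004.01574 — 2 statements merged into one kernel-verified Lean document; each statement's English description precedes it below -/
import Mathlib

section
/- Suppose w : ℝ × ℝ^n → ℝ is C¹ and satisfies the Hamilton–Jacobi–Bellman boundary problem: ∂_t w(t, x) + sup_{u ∈ V} [ L(t, x, u) + ⟨∇_x w(t, x), f(t, x, u)⟩ ] = 0 for all (t, x) ∈ [0,T] × ℝ^n, and w(T, x) = g(x) for all x ∈ ℝ^n. Suppose U : [0,T] × ℝ^n → V attains the supremum, i.e. L(t, x, U(t,x)) + ⟨∇_x w(t, x), f(t, x, U(t,x))⟩ = sup_{u ∈ V} [ L(t, x, u) + ⟨∇_x w(t, x), f(t, x, u)⟩ ] for all (t,x) ∈ [0,T] × ℝ^n. Let x* : [0,T] → ℝ^n be C¹ with x*'(t) = f(t, x*(t), U(t, x*(t))) for all t ∈ [0,T] and x*(0) = x₀, set u*(t) = U(t, x*(t)), and assume u* is continuous. Then for every admissible pair (v, y) with initial condition x₀ one has J(u*, x*) ≥ J(v, y); that is, the feedback control U is optimal. -/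
open Set
open scoped RealInnerProductSpace

section Aux

variable {E : Type*} [NormedAddCommGroup E] [InnerProductSpace ℝ E] [CompleteSpace E]

lemma inner_gradient_eq_aux (w : ℝ × E → ℝ) (hw : ContDiff ℝ 1 w) (t : ℝ) (x h : E) :
    ⟪gradient (fun ξ => w (t, ξ)) x, h⟫ = fderiv ℝ w (t, x) (0, h) := by
  have hdiff : DifferentiableAt ℝ w (t, x) := hw.differentiable one_ne_zero _
  have hcurve : HasFDerivAt (fun ξ : E => ((t, ξ) : ℝ × E))
      (ContinuousLinearMap.inr ℝ ℝ E) x :=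
    HasFDerivAt.prodMk (hasFDerivAt_const t x) (hasFDerivAt_id x)
  have hcomp : HasFDerivAt (fun ξ => w (t, ξ))
      ((fderiv ℝ w (t, x)).comp (ContinuousLinearMap.inr ℝ ℝ E)) x :=
    hdiff.hasFDerivAt.comp x hcurve
  rw [gradient, hcomp.fderiv, InnerProductSpace.toDual_symm_apply]
  rfl

omit [CompleteSpace E] in
lemma deriv_time_eq_aux (w : ℝ × E → ℝ) (hw : ContDiff ℝ 1 w) (t : ℝ) (x : E) :
    deriv (fun τ => w (τ, x)) t = fderiv ℝ w (t, x) (1, 0) := by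
  have hdiff : DifferentiableAt ℝ w (t, x) := hw.differentiable one_ne_zero _
  have hcurve : HasDerivAt (fun τ : ℝ => ((τ, x) : ℝ × E)) (1, 0) t :=
    HasDerivAt.prodMk (hasDerivAt_id t) (hasDerivAt_const t x)
  exact (hdiff.hasFDerivAt.comp_hasDerivAt t hcurve).deriv

lemma fderiv_split_aux (w : ℝ × E → ℝ) (hw : ContDiff ℝ 1 w) (t : ℝ) (x h : E) :
    fderiv ℝ w (t, x) (1, h)
      = deriv (fun τ => w (τ, x)) t + ⟪gradient (fun ξ => w (t, ξ)) x, h⟫ := by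
  rw [deriv_time_eq_aux w hw, inner_gradient_eq_aux w hw]
  have : ((1 : ℝ), h) = ((1 : ℝ), (0 : E)) + ((0 : ℝ), h) := by simp
  rw [this, map_add]

omit [CompleteSpace E] in
lemma B_integral_aux (w : ℝ × E → ℝ) (hw : ContDiff ℝ 1 w) (T : ℝ) (hT : 0 < T)
    (y : ℝ → E) (c : ℝ → E)
    (hy : ∀ s ∈ Icc (0:ℝ) T, HasDerivAt y (c s) s)
    (hc : ContinuousOn c (Icc 0 T)) :
    (ContinuousOn (fun s => fderiv ℝ w (s, y s) (1, c s)) (Icc 0 T)) ∧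
    (∫ s in (0:ℝ)..T, fderiv ℝ w (s, y s) (1, c s)) = w (T, y T) - w (0, y 0) := by
  have hyC : ContinuousOn y (Icc 0 T) := fun s hs =>
    (hy s hs).continuousAt.continuousWithinAt
  have hcurve : ContinuousOn (fun s => ((s, y s) : ℝ × E)) (Icc 0 T) :=
    continuousOn_id.prodMk hyC
  have hfd : ContinuousOn (fun s => fderiv ℝ w (s, y s)) (Icc 0 T) :=
    (hw.continuous_fderiv one_ne_zero).comp_continuousOn hcurve
  have hBc : ContinuousOn (fun s => fderiv ℝ w (s, y s) (1, c s)) (Icc 0 T) :=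
    hfd.clm_apply (continuousOn_const.prodMk hc)
  refine ⟨hBc, ?_⟩
  have huIcc : uIcc (0:ℝ) T = Icc 0 T := uIcc_of_le hT.le
  apply intervalIntegral.integral_eq_sub_of_hasDerivAt
  · intro s hs
    rw [huIcc] at hs
    exact (hw.differentiable one_ne_zero _).hasFDerivAt.comp_hasDerivAt s
      (HasDerivAt.prodMk (hasDerivAt_id s) (hy s hs))
  · exact (huIcc ▸ hBc).intervalIntegrable

end Aux

/-- Verification theorem (sufficient condition of optimality), optimality part.
Suppose `w : ℝ × ℝ^n → ℝ` is `C¹` and satisfies the Hamilton–Jacobi–Bellman boundary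
problem: `∂ₜ w(t,x) + sup_{u ∈ V} [L(t,x,u) + ⟪∇ₓ w(t,x), f(t,x,u)⟫] = 0` on
`[0,T] × ℝ^n` and `w(T,x) = g x`.  Suppose `U : [0,T] × ℝ^n → V` attains the supremum
(so the value at `U t x` is the greatest element of the corresponding range).  If
`x*` is `C¹` with `x*'(t) = f(t, x*(t), U(t, x*(t)))` on `[0,T]`, `x*(0) = x₀`, and
`u*(t) = U(t, x*(t))` is continuous, then for every admissible pair `(v, y)` with
initial condition `x₀` one has `J(u*, x*) ≥ J(v, y)`, where
`J(v, y) = ∫₀ᵀ L(s, y(s), v(s)) ds + g(y T)`. -/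
theorem feedback_control_optimal (n : ℕ) (V : Type*) [MetricSpace V] [Nonempty V]
    (T : ℝ) (hT : 0 < T)
    (L : ℝ → EuclideanSpace ℝ (Fin n) → V → ℝ)
    (f : ℝ → EuclideanSpace ℝ (Fin n) → V → EuclideanSpace ℝ (Fin n))
    (hL : Continuous fun q : ℝ × EuclideanSpace ℝ (Fin n) × V => L q.1 q.2.1 q.2.2)
    (hf : Continuous fun q : ℝ × EuclideanSpace ℝ (Fin n) × V => f q.1 q.2.1 q.2.2)
    (g : EuclideanSpace ℝ (Fin n) → ℝ)
    (w : ℝ × EuclideanSpace ℝ (Fin n) → ℝ)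
    (hw : ContDiff ℝ 1 w)
    (U : ℝ → EuclideanSpace ℝ (Fin n) → V)
    (hU : ∀ t ∈ Icc (0:ℝ) T, ∀ x : EuclideanSpace ℝ (Fin n),
      IsGreatest
        (Set.range fun u : V =>
          L t x u + ⟪gradient (fun ξ => w (t, ξ)) x, f t x u⟫)
        (L t x (U t x) + ⟪gradient (fun ξ => w (t, ξ)) x, f t x (U t x)⟫))
    (hHJB : ∀ t ∈ Icc (0:ℝ) T, ∀ x : EuclideanSpace ℝ (Fin n),
      deriv (fun τ => w (τ, x)) t
        + sSup (Set.range fun u : V =>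
            L t x u + ⟪gradient (fun ξ => w (t, ξ)) x, f t x u⟫) = 0)
    (hwT : ∀ x : EuclideanSpace ℝ (Fin n), w (T, x) = g x)
    (x₀ : EuclideanSpace ℝ (Fin n))
    (xs : ℝ → EuclideanSpace ℝ (Fin n))
    (hxs : ∀ t ∈ Icc (0:ℝ) T, HasDerivAt xs (f t (xs t) (U t (xs t))) t)
    (hxs0 : xs 0 = x₀)
    (hus : ContinuousOn (fun t => U t (xs t)) (Icc 0 T)) :
    ∀ (v : ℝ → V) (y : ℝ → EuclideanSpace ℝ (Fin n)),
      ContinuousOn v (Icc 0 T) →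
      (∀ s ∈ Icc (0:ℝ) T, HasDerivAt y (f s (y s) (v s)) s) →
      y 0 = x₀ →
      (∫ s in (0:ℝ)..T, L s (y s) (v s)) + g (y T)
        ≤ (∫ s in (0:ℝ)..T, L s (xs s) (U s (xs s))) + g (xs T) := by
  intro v y hv hy hy0
  have huIcc : uIcc (0:ℝ) T = Icc 0 T := uIcc_of_le hT.le
  -- continuity of trajectories
  have hyC : ContinuousOn y (Icc 0 T) := fun s hs =>
    (hy s hs).continuousAt.continuousWithinAt
  have hxsC : ContinuousOn xs (Icc 0 T) := fun s hs =>
    (hxs s hs).continuousAt.continuousWithinAt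
  -- the controls' vector fields
  have hcy : ContinuousOn (fun s => f s (y s) (v s)) (Icc 0 T) :=
    hf.comp_continuousOn (continuousOn_id.prodMk (hyC.prodMk hv))
  have hcx : ContinuousOn (fun s => f s (xs s) (U s (xs s))) (Icc 0 T) :=
    hf.comp_continuousOn (continuousOn_id.prodMk (hxsC.prodMk hus))
  -- running costs
  have hLy : ContinuousOn (fun s => L s (y s) (v s)) (Icc 0 T) :=
    hL.comp_continuousOn (continuousOn_id.prodMk (hyC.prodMk hv))
  have hLx : ContinuousOn (fun s => L s (xs s) (U s (xs s))) (Icc 0 T) :=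
    hL.comp_continuousOn (continuousOn_id.prodMk (hxsC.prodMk hus))
  -- the integral of the derivative of w along the trajectories
  obtain ⟨hBCy, hIy⟩ := B_integral_aux w hw T hT y _ hy hcy
  obtain ⟨hBCx, hIx⟩ := B_integral_aux w hw T hT xs _ hxs hcx
  -- pointwise inequality for (v, y)
  have hptY : ∀ s ∈ Icc (0:ℝ) T,
      L s (y s) (v s) ≤ -(fderiv ℝ w (s, y s) (1, f s (y s) (v s))) := by
    intro s hs
    have hgr := hU s hs (y s)
    have hhjb := hHJB s hs (y s)
    have hsup := hgr.csSup_eq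
    have hmem : L s (y s) (v s) + ⟪gradient (fun ξ => w (s, ξ)) (y s), f s (y s) (v s)⟫
        ≤ sSup (Set.range fun u : V =>
            L s (y s) u + ⟪gradient (fun ξ => w (s, ξ)) (y s), f s (y s) u⟫) := by
      rw [hsup]; exact hgr.2 ⟨v s, rfl⟩
    rw [fderiv_split_aux w hw]
    linarith
  -- pointwise equality for (u*, x*)
  have hptX : ∀ s ∈ Icc (0:ℝ) T,
      L s (xs s) (U s (xs s)) = -(fderiv ℝ w (s, xs s) (1, f s (xs s) (U s (xs s)))) := by
    intro s hs
    have hgr := hU s hs (xs s)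
    have hhjb := hHJB s hs (xs s)
    have hsup := hgr.csSup_eq
    rw [fderiv_split_aux w hw]
    linarith [hsup]
  -- integrate the inequality
  have hInty : (∫ s in (0:ℝ)..T, L s (y s) (v s))
      ≤ ∫ s in (0:ℝ)..T, -(fderiv ℝ w (s, y s) (1, f s (y s) (v s))) := by
    apply intervalIntegral.integral_mono_on hT.le
    · exact (huIcc ▸ hLy).intervalIntegrable
    · exact ((huIcc ▸ hBCy).neg).intervalIntegrable
    · exact hptY
  have hIntx : (∫ s in (0:ℝ)..T, L s (xs s) (U s (xs s)))
      = ∫ s in (0:ℝ)..T, -(fderiv ℝ w (s, xs s) (1, f s (xs s) (U s (xs s)))) := by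
    apply intervalIntegral.integral_congr
    intro s hs
    exact hptX s (huIcc ▸ hs)
  rw [intervalIntegral.integral_neg] at hInty hIntx
  rw [hIy, hy0] at hInty
  rw [hIx, hxs0] at hIntx
  have h1 := hwT (y T)
  have h2 := hwT (xs T)
  linarith
end

section
/- Suppose w : ℝ × ℝ^n → ℝ is C¹ and satisfies the Hamilton–Jacobi–Bellman boundary problem: ∂_t w(t, x) + sup_{u ∈ V} [ L(t, x, u) + ⟨∇_x w(t, x), f(t, x, u)⟩ ] = 0 for all (t, x) ∈ [0,T] × ℝ^n, and w(T, x) = g(x) for all x ∈ ℝ^n. Suppose U : [0,T] × ℝ^n → V attains the supremum, i.e. L(t, x, U(t,x)) + ⟨∇_x w(t, x), f(t, x, U(t,x))⟩ = sup_{u ∈ V} [ L(t, x, u) + ⟨∇_x w(t, x), f(t, x, u)⟩ ] for all (t,x) ∈ [0,T] × ℝ^n. Let x* : [0,T] → ℝ^n be C¹ with x*'(t) = f(t, x*(t), U(t, x*(t))) for all t ∈ [0,T] and x*(0) = x₀, set u*(t) = U(t, x*(t)), and assume u* is continuous. Then J(u*, x*) = w(0, x₀); consequently w(0, x₀) is the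 greatest element of the set { J(v, y) : (v, y) an admissible pair with initial condition x₀ }, i.e. w(0, x₀) equals the value of the optimal control problem at (0, x₀). -/
open Set
open scoped RealInnerProductSpace

lemma split_fderiv {E : Type*} [NormedAddCommGroup E] [InnerProductSpace ℝ E] [CompleteSpace E]
    (w : ℝ × E → ℝ) (hw : ContDiff ℝ 1 w) (t : ℝ) (x : E) (v : E) :
    (fderiv ℝ w (t, x)) (1, v)
      = deriv (fun τ => w (τ, x)) t + ⟪gradient (fun ξ => w (t, ξ)) x, v⟫ := by
  have hD : HasFDerivAt w (fderiv ℝ w (t, x)) (t, x) :=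
    ((hw.differentiable one_ne_zero) (t, x)).hasFDerivAt
  have ht : HasDerivAt (fun τ => w (τ, x)) ((fderiv ℝ w (t, x)) (1, 0)) t :=
    hD.comp_hasDerivAt t ((hasDerivAt_id t).prodMk (hasDerivAt_const t x))
  have hx : HasFDerivAt (fun ξ => w (t, ξ))
      ((fderiv ℝ w (t, x)).comp (((0 : E →L[ℝ] ℝ)).prod (ContinuousLinearMap.id ℝ E))) x :=
    hD.comp x ((hasFDerivAt_const t x).prodMk (hasFDerivAt_id x))
  have hg : HasGradientAt (fun ξ => w (t, ξ))
      ((InnerProductSpace.toDual ℝ E).symm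
        ((fderiv ℝ w (t, x)).comp (((0 : E →L[ℝ] ℝ)).prod (ContinuousLinearMap.id ℝ E)))) x := by
    rw [hasGradientAt_iff_hasFDerivAt]
    simpa using hx
  have hgrad := hg.gradient
  rw [hgrad, ht.deriv, InnerProductSpace.toDual_symm_apply]
  have : ((1:ℝ), v) = ((1:ℝ), (0:E)) + ((0:ℝ), v) := by simp
  rw [this, map_add]
  simp


/-- Verification theorem: the solution of the HJB boundary problem is the value function.
Suppose `w : ℝ × ℝ^n → ℝ` is `C¹` and satisfies the Hamilton–Jacobi–Bellman boundary
problem: `∂ₜ w(t,x) + sup_{u ∈ V} [L(t,x,u) + ⟪∇ₓ w(t,x), f(t,x,u)⟫] = 0` on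
`[0,T] × ℝ^n` and `w(T,x) = g x`.  Suppose `U : [0,T] × ℝ^n → V` attains the supremum
(so the value at `U t x` is the greatest element of the corresponding range).  If
`x*` is `C¹` with `x*'(t) = f(t, x*(t), U(t, x*(t)))` on `[0,T]`, `x*(0) = x₀`, and
`u*(t) = U(t, x*(t))` is continuous, then `J(u*, x*) = w(0, x₀)` and `w(0, x₀)`
is the greatest element of the set of payoffs `J(v, y)` over all admissible pairs
`(v, y)` with initial condition `x₀`, where
`J(v, y) = ∫₀ᵀ L(s, y(s), v(s)) ds + g(y T)`; that is, `w(0, x₀)` is the value of the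
optimal control problem at `(0, x₀)`. -/
theorem value_function_eq_w (n : ℕ) (V : Type*) [MetricSpace V] [Nonempty V]
    (T : ℝ) (hT : 0 < T)
    (L : ℝ → EuclideanSpace ℝ (Fin n) → V → ℝ)
    (f : ℝ → EuclideanSpace ℝ (Fin n) → V → EuclideanSpace ℝ (Fin n))
    (hL : Continuous fun q : ℝ × EuclideanSpace ℝ (Fin n) × V => L q.1 q.2.1 q.2.2)
    (hf : Continuous fun q : ℝ × EuclideanSpace ℝ (Fin n) × V => f q.1 q.2.1 q.2.2)
    (g : EuclideanSpace ℝ (Fin n) → ℝ)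
    (w : ℝ × EuclideanSpace ℝ (Fin n) → ℝ)
    (hw : ContDiff ℝ 1 w)
    (U : ℝ → EuclideanSpace ℝ (Fin n) → V)
    (hU : ∀ t ∈ Icc (0:ℝ) T, ∀ x : EuclideanSpace ℝ (Fin n),
      IsGreatest
        (Set.range fun u : V =>
          L t x u + ⟪gradient (fun ξ => w (t, ξ)) x, f t x u⟫)
        (L t x (U t x) + ⟪gradient (fun ξ => w (t, ξ)) x, f t x (U t x)⟫))
    (hHJB : ∀ t ∈ Icc (0:ℝ) T, ∀ x : EuclideanSpace ℝ (Fin n),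
      deriv (fun τ => w (τ, x)) t
        + sSup (Set.range fun u : V =>
            L t x u + ⟪gradient (fun ξ => w (t, ξ)) x, f t x u⟫) = 0)
    (hwT : ∀ x : EuclideanSpace ℝ (Fin n), w (T, x) = g x)
    (x₀ : EuclideanSpace ℝ (Fin n))
    (xs : ℝ → EuclideanSpace ℝ (Fin n))
    (hxs : ∀ t ∈ Icc (0:ℝ) T, HasDerivAt xs (f t (xs t) (U t (xs t))) t)
    (hxs0 : xs 0 = x₀)
    (hus : ContinuousOn (fun t => U t (xs t)) (Icc 0 T)) :
    ((∫ s in (0:ℝ)..T, L s (xs s) (U s (xs s))) + g (xs T) = w (0, x₀))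
      ∧ IsGreatest
          {J : ℝ | ∃ (v : ℝ → V) (y : ℝ → EuclideanSpace ℝ (Fin n)),
            ContinuousOn v (Icc 0 T)
            ∧ (∀ s ∈ Icc (0:ℝ) T, HasDerivAt y (f s (y s) (v s)) s)
            ∧ y 0 = x₀
            ∧ J = (∫ s in (0:ℝ)..T, L s (y s) (v s)) + g (y T)}
          (w (0, x₀)) := by
  have huIcc : uIcc (0:ℝ) T = Icc 0 T := uIcc_of_le hT.le
  -- pointwise bound
  have point : ∀ t ∈ Icc (0:ℝ) T, ∀ (x : EuclideanSpace ℝ (Fin n)) (u : V),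
      L t x u + (fderiv ℝ w (t, x)) (1, f t x u) ≤ 0 := by
    intro t ht x u
    rw [split_fderiv w hw]
    have h2 := hHJB t ht x
    have h3 : sSup (Set.range fun u : V =>
        L t x u + ⟪gradient (fun ξ => w (t, ξ)) x, f t x u⟫)
        = L t x (U t x) + ⟪gradient (fun ξ => w (t, ξ)) x, f t x (U t x)⟫ :=
      (hU t ht x).csSup_eq
    have h4 : L t x u + ⟪gradient (fun ξ => w (t, ξ)) x, f t x u⟫
        ≤ L t x (U t x) + ⟪gradient (fun ξ => w (t, ξ)) x, f t x (U t x)⟫ :=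
      (hU t ht x).2 ⟨u, rfl⟩
    rw [h3] at h2
    linarith
  have pointEq : ∀ t ∈ Icc (0:ℝ) T, ∀ (x : EuclideanSpace ℝ (Fin n)),
      L t x (U t x) + (fderiv ℝ w (t, x)) (1, f t x (U t x)) = 0 := by
    intro t ht x
    rw [split_fderiv w hw]
    have h2 := hHJB t ht x
    rw [(hU t ht x).csSup_eq] at h2
    linarith
  -- main computation for an arbitrary admissible pair
  have key : ∀ (v : ℝ → V) (y : ℝ → EuclideanSpace ℝ (Fin n)),
      ContinuousOn v (Icc 0 T) →
      (∀ s ∈ Icc (0:ℝ) T, HasDerivAt y (f s (y s) (v s)) s) →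
      y 0 = x₀ →
      ((∫ s in (0:ℝ)..T, L s (y s) (v s)) + g (y T) - w (0, x₀)
          = ∫ s in (0:ℝ)..T,
              (L s (y s) (v s) + (fderiv ℝ w (s, y s)) (1, f s (y s) (v s))))
        ∧ IntervalIntegrable
            (fun s => L s (y s) (v s) + (fderiv ℝ w (s, y s)) (1, f s (y s) (v s)))
            MeasureTheory.volume 0 T := by
    intro v y hv hy hy0
    have ycont : ContinuousOn y (Icc 0 T) := fun s hs =>
      ((hy s hs).continuousAt).continuousWithinAt
    have fcont : ContinuousOn (fun s => f s (y s) (v s)) (Icc 0 T) :=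
      hf.comp_continuousOn (continuousOn_id.prodMk (ycont.prodMk hv))
    have Lcont : ContinuousOn (fun s => L s (y s) (v s)) (Icc 0 T) :=
      hL.comp_continuousOn (continuousOn_id.prodMk (ycont.prodMk hv))
    have Dcont : Continuous (fun p : ℝ × EuclideanSpace ℝ (Fin n)
        => fderiv ℝ w p) := hw.continuous_fderiv one_ne_zero
    have Gcont : ContinuousOn
        (fun s => (fderiv ℝ w (s, y s)) ((1:ℝ), f s (y s) (v s))) (Icc 0 T) := by
      exact isBoundedBilinearMap_apply.continuous.comp_continuousOn
        ((Dcont.comp_continuousOn (continuousOn_id.prodMk ycont)).prodMk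
          (continuousOn_const.prodMk fcont))
    have hLint : IntervalIntegrable (fun s => L s (y s) (v s))
        MeasureTheory.volume 0 T := (huIcc ▸ Lcont).intervalIntegrable
    have hGint : IntervalIntegrable
        (fun s => (fderiv ℝ w (s, y s)) ((1:ℝ), f s (y s) (v s)))
        MeasureTheory.volume 0 T := (huIcc ▸ Gcont).intervalIntegrable
    have chain : ∀ s ∈ uIcc (0:ℝ) T,
        HasDerivAt (fun s => w (s, y s))
          ((fderiv ℝ w (s, y s)) ((1:ℝ), f s (y s) (v s))) s := by
      intro s hs
      rw [huIcc] at hs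
      exact ((hw.differentiable one_ne_zero) (s, y s)).hasFDerivAt.comp_hasDerivAt s
        ((hasDerivAt_id s).prodMk (hy s hs))
    have hftc : (∫ s in (0:ℝ)..T, (fderiv ℝ w (s, y s)) ((1:ℝ), f s (y s) (v s)))
        = w (T, y T) - w (0, y 0) :=
      intervalIntegral.integral_eq_sub_of_hasDerivAt chain hGint
    constructor
    · rw [intervalIntegral.integral_add hLint hGint, hftc, hwT, hy0]
      ring
    · exact hLint.add hGint
  -- first conclusion
  have hmain : (∫ s in (0:ℝ)..T, L s (xs s) (U s (xs s))) + g (xs T) = w (0, x₀) := by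
    obtain ⟨heq, _⟩ := key (fun t => U t (xs t)) xs hus hxs hxs0
    have hzero : (∫ s in (0:ℝ)..T,
        (L s (xs s) (U s (xs s)) + (fderiv ℝ w (s, xs s)) (1, f s (xs s) (U s (xs s)))))
        = 0 := by
      rw [intervalIntegral.integral_congr (g := fun _ => (0:ℝ))
        (fun s hs => pointEq s (huIcc ▸ hs) (xs s))]
      simp
    rw [hzero] at heq
    linarith
  refine ⟨hmain, ⟨fun t => U t (xs t), xs, hus, hxs, hxs0, hmain.symm⟩, ?_⟩
  rintro J ⟨v, y, hv, hy, hy0, rfl⟩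
  obtain ⟨heq, hint⟩ := key v y hv hy hy0
  have hle : (∫ s in (0:ℝ)..T,
      (L s (y s) (v s) + (fderiv ℝ w (s, y s)) (1, f s (y s) (v s)))) ≤ 0 := by
    have := intervalIntegral.integral_mono_on hT.le hint
      (intervalIntegrable_const (c := (0:ℝ)))
      (fun s hs => point s hs (y s) (v s))
    simpa using this
  linarith
end
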